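/- For every n ≥ 1 the graph T_n is a co-TT graph, where T_n consists of a path v, x_0, x_1, ..., x_n, w, a vertex x adjacent to all of x_0, ..., x_n, and a pendant vertex u adjacent only to x. -/
import Mathlib


/-- `G` is a co-TT (signed-interval) graph. -/
def IsCoTT {V : Type*} (G : SimpleGraph V) : Prop :=
  ∃ l r : V → ℝ, ∀ u v : V, u ≠ v → (G.Adj u v ↔ l u ≤ r v ∧ l v ≤ r u)

/-- Base adjacency of `T_n`.  Vertices: `.inl i` is `x_i` (for `0 ≤ i ≤ n`);
`.inr 0 = v`, `.inr 1 = w`, `.inr 2 = u`, `.inr 3 = x`.  Edges: path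
`v, x_0, x_1, …, x_n, w`, `x` adjacent to every `x_i`, and `x u`. -/
def tnRel (n : ℕ) (a b : Fin (n + 1) ⊕ Fin 4) : Prop :=
  (∃ i j : Fin (n + 1), a = .inl i ∧ b = .inl j ∧ (j : ℕ) = (i : ℕ) + 1) ∨
  (∃ i : Fin (n + 1), a = .inr 0 ∧ b = .inl i ∧ (i : ℕ) = 0) ∨
  (∃ i : Fin (n + 1), a = .inl i ∧ (i : ℕ) = n ∧ b = .inr 1) ∨
  (∃ i : Fin (n + 1), a = .inr 3 ∧ b = .inl i) ∨
  (a = .inr 3 ∧ b = .inr 2)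

/-- The graph `T_n`. -/
def TnGraph (n : ℕ) : SimpleGraph (Fin (n + 1) ⊕ Fin 4) :=
  SimpleGraph.fromRel (tnRel n)

/-- For every `n ≥ 1`, `T_n` is a co-TT graph. -/
theorem TnGraph_isCoTT : ∀ n : ℕ, 1 ≤ n → IsCoTT (TnGraph n) := by
  intro n hn
  refine ⟨Sum.elim (fun i => (i : ℝ)) ![1, n + 1/2, n + 1/5, 1/10],
          Sum.elim (fun i => (i : ℝ) + 1) ![0, n, 1/10, n + 3/10], ?_⟩
  intro a b hab
  have hn' : (1:ℝ) ≤ n := by exact_mod_cast hn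
  rw [TnGraph, SimpleGraph.fromRel_adj]
  rcases a with i | f <;> rcases b with j | g
  · -- x_i vs x_j
    simp only [tnRel, hab, ne_eq, not_false_iff, true_and, Sum.inl.injEq,
      Sum.elim_inl, reduceCtorEq, exists_eq_left', and_false, false_and,
      exists_false, or_false, false_or, exists_and_left, exists_eq_left]
    have hij : (i : ℕ) ≠ (j : ℕ) := by
      intro h; exact hab (by simpa [Fin.ext_iff] using h)
    constructor
    · rintro (h | h)
      · exact ⟨by exact_mod_cast (by omega : (i:ℕ) ≤ (j:ℕ) + 1),
               by exact_mod_cast (by omega : (j:ℕ) ≤ (i:ℕ) + 1)⟩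
      · exact ⟨by exact_mod_cast (by omega : (i:ℕ) ≤ (j:ℕ) + 1),
               by exact_mod_cast (by omega : (j:ℕ) ≤ (i:ℕ) + 1)⟩
    · rintro ⟨h1, h2⟩
      have h1' : (i:ℕ) ≤ (j:ℕ) + 1 := by exact_mod_cast h1
      have h2' : (j:ℕ) ≤ (i:ℕ) + 1 := by exact_mod_cast h2
      omega
  · -- x_i vs special vertex
    have hi : (i : ℕ) ≤ n := i.is_le
    have hi' : ((i:ℕ) : ℝ) ≤ n := by exact_mod_cast hi
    have hi0 : (0:ℝ) ≤ ((i:ℕ) : ℝ) := Nat.cast_nonneg _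
    fin_cases g <;> simp [tnRel]
    · -- w : adjacent iff i = n
      constructor
      · intro h
        have hIn : ((i:ℕ):ℝ) = n := by exact_mod_cast h
        exact ⟨by omega, by rw [hIn]; norm_num⟩
      · rintro ⟨_, h2⟩
        have hlt : (n:ℝ) < (i:ℕ) + 1 := by linarith
        have : n < (i:ℕ) + 1 := by exact_mod_cast hlt
        omega
    · -- u : not adjacent
      intro h
      have h1 : ((i:ℕ):ℝ) < 1 := by linarith
      have h2 : (i:ℕ) < 1 := by exact_mod_cast h1
      have h3 : ((i:ℕ):ℝ) = 0 := by exact_mod_cast Nat.lt_one_iff.mp h2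
      rw [h3]; linarith
    · -- x : adjacent
      exact ⟨by linarith, by linarith⟩
  · -- special vertex vs x_i
    have hi : (j : ℕ) ≤ n := j.is_le
    have hi' : ((j:ℕ) : ℝ) ≤ n := by exact_mod_cast hi
    have hi0 : (0:ℝ) ≤ ((j:ℕ) : ℝ) := Nat.cast_nonneg _
    fin_cases f <;> simp [tnRel]
    · -- w
      constructor
      · intro h
        have hIn : ((j:ℕ):ℝ) = n := by exact_mod_cast h
        exact ⟨by rw [hIn]; norm_num, by omega⟩
      · rintro ⟨h2, _⟩
        have hlt : (n:ℝ) < (j:ℕ) + 1 := by linarith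
        have : n < (j:ℕ) + 1 := by exact_mod_cast hlt
        omega
    · -- u
      intro h
      have h1 : (n:ℝ) < (j:ℕ) + 1 := by linarith
      have h2 : n < (j:ℕ) + 1 := by exact_mod_cast h1
      have : (j:ℕ) = n := by omega
      have h3 : ((j:ℕ):ℝ) = n := by exact_mod_cast this
      rw [h3]; linarith
    · -- x
      exact ⟨by linarith, by linarith⟩
  · -- special vs special
    fin_cases f <;> fin_cases g <;> simp_all [tnRel] <;> intros <;>
      first
        | positivity
        | linarith
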